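/- arXiv:2302.05445 — 5 statements merged into one kernel-verified Lean document; each statement's English description precedes it below -/
import Mathlib

section
/- Let r and s be positive integers with r not a perfect square, and let a, b be positive integers with a^2 - r*b^2 = 1. Define P(X) = b*X^2 - 2a*X + (r+s)*b. Then |P(√r + i√s)| ≤ 2√(r+s)/(a + b√r). -/
theorem stmt0 (r s a b : ℤ) (hr : 0 < r) (hs : 0 < s) (ha : 0 < a) (hb : 0 < b)
    (hsq : ¬ IsSquare r) (hpell : a ^ 2 - r * b ^ 2 = 1) :
    ‖((b : ℂ) * ((Real.sqrt (r : ℝ) : ℂ) + Complex.I * (Real.sqrt (s : ℝ) : ℂ)) ^ 2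
        - 2 * (a : ℂ) * ((Real.sqrt (r : ℝ) : ℂ) + Complex.I * (Real.sqrt (s : ℝ) : ℂ))
        + ((r : ℂ) + (s : ℂ)) * (b : ℂ))‖
      ≤ 2 * Real.sqrt ((r : ℝ) + (s : ℝ)) / ((a : ℝ) + (b : ℝ) * Real.sqrt (r : ℝ)) := by
  set sr := Real.sqrt (r : ℝ) with hsrdef
  set ss := Real.sqrt (s : ℝ) with hssdef
  have hsr : sr ^ 2 = (r : ℝ) := Real.sq_sqrt (by exact_mod_cast hr.le)
  have hss : ss ^ 2 = (s : ℝ) := Real.sq_sqrt (by exact_mod_cast hs.le)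
  have hsr0 : 0 ≤ sr := Real.sqrt_nonneg _
  have hss0 : 0 ≤ ss := Real.sqrt_nonneg _
  have hrc : (r : ℂ) = ((sr : ℝ) : ℂ) ^ 2 := by
    rw [← Complex.ofReal_pow, hsr]; norm_cast
  have hsc : (s : ℂ) = ((ss : ℝ) : ℂ) ^ 2 := by
    rw [← Complex.ofReal_pow, hss]; norm_cast
  have key : (b : ℂ) * ((sr : ℂ) + Complex.I * (ss : ℂ)) ^ 2
        - 2 * (a : ℂ) * ((sr : ℂ) + Complex.I * (ss : ℂ))
        + ((r : ℂ) + (s : ℂ)) * (b : ℂ)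
      = (((-2 * ((a : ℝ) - (b : ℝ) * sr) : ℝ)) : ℂ) * ((sr : ℂ) + Complex.I * (ss : ℂ)) := by
    rw [hrc, hsc]
    push_cast
    linear_combination ((b : ℂ) * (ss : ℂ) ^ 2) * Complex.I_sq
  rw [key, norm_mul, Complex.norm_real, Real.norm_eq_abs]
  have habsz : ‖(sr : ℂ) + Complex.I * (ss : ℂ)‖ = Real.sqrt ((r : ℝ) + (s : ℝ)) := by
    rw [mul_comm Complex.I, Complex.norm_add_mul_I, hsr, hss]
  rw [habsz]
  have hZ : (a : ℝ) ^ 2 - (r : ℝ) * (b : ℝ) ^ 2 = 1 := by exact_mod_cast hpell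
  have hprod : ((a : ℝ) + (b : ℝ) * sr) * ((a : ℝ) - (b : ℝ) * sr) = 1 := by
    linear_combination hZ - (b : ℝ) ^ 2 * hsr
  have hpos : 0 < (a : ℝ) + (b : ℝ) * sr := by
    have ha' : (0 : ℝ) < (a : ℝ) := by exact_mod_cast ha
    have hb' : (0 : ℝ) < (b : ℝ) := by exact_mod_cast hb
    positivity
  have heq : (a : ℝ) - (b : ℝ) * sr = 1 / ((a : ℝ) + (b : ℝ) * sr) :=
    eq_one_div_of_mul_eq_one_right hprod
  have hnn : 0 ≤ (a : ℝ) - (b : ℝ) * sr := by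
    rw [heq]; positivity
  rw [abs_of_nonpos (by linarith), heq]
  have hsnn : 0 ≤ Real.sqrt ((r : ℝ) + (s : ℝ)) := Real.sqrt_nonneg _
  apply le_of_eq
  field_simp
end

section
/- Let r and s be positive integers with r not a perfect square, and let a, b be positive integers with a^2 - r*b^2 = 1. Then the polynomial P(X) = b*X^2 - 2a*X + (r+s)*b has a complex root α with |(√r + i√s) - α| ≤ 2(r+s)^2 / H(P)^2, where H(P) = max{b, 2a, (r+s)b} is the height of P. -/
set_option maxHeartbeats 1000000 in

theorem stmt1 (r s a b : ℤ) (hr : 0 < r) (hs : 0 < s) (ha : 0 < a) (hb : 0 < b)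
    (hsq : ¬ IsSquare r) (hpell : a ^ 2 - r * b ^ 2 = 1) :
    ∃ α : ℂ, (b : ℂ) * α ^ 2 - 2 * (a : ℂ) * α + ((r : ℂ) + (s : ℂ)) * (b : ℂ) = 0 ∧
      ‖((Real.sqrt (r : ℝ) : ℂ) + Complex.I * (Real.sqrt (s : ℝ) : ℂ)) - α‖
        ≤ 2 * ((r : ℝ) + (s : ℝ)) ^ 2 / ((max b (max (2 * a) ((r + s) * b)) : ℤ) : ℝ) ^ 2 := by
  have hr2 : (2:ℤ) ≤ r := by
    by_contra h
    push_neg at h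
    interval_cases r
    exact hsq IsSquare.one
  have hbR : (0:ℝ) < (b:ℝ) := by exact_mod_cast hb
  have haR : (1:ℝ) ≤ (a:ℝ) := by exact_mod_cast ha
  have hrR : (2:ℝ) ≤ (r:ℝ) := by exact_mod_cast hr2
  have hsR : (1:ℝ) ≤ (s:ℝ) := by exact_mod_cast hs
  have hbR1 : (1:ℝ) ≤ (b:ℝ) := by exact_mod_cast hb
  have hpellR : (a:ℝ)^2 - r*b^2 = 1 := by exact_mod_cast hpell
  set u := Real.sqrt (r:ℝ) with hu
  set v := Real.sqrt (s:ℝ) with hv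
  have hu0 : 0 ≤ u := Real.sqrt_nonneg _
  have hu2 : u^2 = (r:ℝ) := Real.sq_sqrt (by linarith)
  have hu1 : 1 ≤ u := by nlinarith
  have hv0 : 0 ≤ v := Real.sqrt_nonneg _
  have hv2 : v^2 = (s:ℝ) := Real.sq_sqrt (by linarith)
  have hv1 : 1 ≤ v := by nlinarith
  have hsb : (0:ℝ) ≤ (s:ℝ)*b^2 - 1 := by nlinarith
  set c := Real.sqrt ((s:ℝ)*b^2 - 1) with hcdef
  have hc0 : 0 ≤ c := Real.sqrt_nonneg _
  have hc2 : c^2 = (s:ℝ)*b^2 - 1 := Real.sq_sqrt hsb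
  have hab : (b:ℝ) ≤ (a:ℝ) := by nlinarith
  -- real estimates
  have hbu : (b:ℝ) ≤ (b:ℝ)*u := by nlinarith
  have hkey1 : ((a:ℝ) - b*u)*((a:ℝ) + b*u) = 1 := by
    linear_combination hpellR - (b:ℝ)^2*hu2
  have hsum1 : 2*(b:ℝ) ≤ (a:ℝ) + (b:ℝ)*u := by linarith
  have hmin1 : 0 ≤ (a:ℝ) - b*u := by nlinarith [hkey1, hsum1, hbR]
  have ht1 : (a:ℝ)/(b:ℝ) - u ≤ 1/(2*(b:ℝ)^2) := by
    rw [div_sub' hbR.ne', div_le_div_iff₀ hbR (by positivity)]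
    nlinarith [hkey1, hmin1, hsum1, hbR]
  have ht1' : 0 ≤ (a:ℝ)/(b:ℝ) - u := by
    rw [sub_nonneg, le_div_iff₀ hbR]
    nlinarith [hmin1]
  have hkey2 : ((b:ℝ)*v - c)*((b:ℝ)*v + c) = 1 := by
    linear_combination (b:ℝ)^2*hv2 - hc2
  have hsum2 : (b:ℝ) ≤ (b:ℝ)*v + c := by nlinarith
  have hmin2 : 0 ≤ (b:ℝ)*v - c := by nlinarith [hkey2, hsum2, hbR]
  have ht2 : v - c/(b:ℝ) ≤ 1/(b:ℝ)^2 := by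
    rw [sub_div' hbR.ne', div_le_div_iff₀ hbR (by positivity)]
    nlinarith [hkey2, hmin2, hsum2, hbR]
  have ht2' : 0 ≤ v - c/(b:ℝ) := by
    rw [sub_nonneg, div_le_iff₀ hbR]
    nlinarith [hmin2]
  -- height bound
  have hHb : 3 * (max b (max (2 * a) ((r + s) * b)))^2 ≤ 4*(r+s)^2*b^2 := by
    rcases max_choice b (max (2*a) ((r+s)*b)) with h | h <;> rw [h]
    · have h9 : (9:ℤ) ≤ (r+s)^2 := by nlinarith
      nlinarith [h9, sq_nonneg b]
    · rcases max_choice (2*a) ((r+s)*b) with h' | h' <;> rw [h']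
      · have hb2 : (1:ℤ) ≤ b^2 := by nlinarith
        have h4 : (r+1)^2 ≤ (r+s)^2 := by nlinarith
        nlinarith [hpell, hb2, h4, sq_nonneg b,
          mul_nonneg (mul_nonneg (by linarith : (0:ℤ) ≤ r-2) (by linarith : (0:ℤ) ≤ r+1)) (sq_nonneg b)]
      · nlinarith [hr2, hs, hb, sq_nonneg (b*(r+s)), sq_nonneg ((r+s)*b)]
  have hHpos : 0 < max b (max (2 * a) ((r + s) * b)) := lt_of_lt_of_le hb (le_max_left _ _)
  have hHR : (0:ℝ) < ((max b (max (2 * a) ((r + s) * b)) : ℤ):ℝ) := by exact_mod_cast hHpos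
  have hbC : (b:ℂ) ≠ 0 := by
    simp only [ne_eq, Int.cast_eq_zero]; exact hb.ne'
  have hc2C : (c:ℂ)^2 = (s:ℂ)*(b:ℂ)^2 - 1 := by
    rw [show ((c:ℝ):ℂ)^2 = ((c^2 : ℝ) : ℂ) by push_cast; ring, hc2]
    push_cast; ring
  have hpellC : (a:ℂ)^2 - (r:ℂ)*(b:ℂ)^2 = 1 := by exact_mod_cast hpell
  refine ⟨((a:ℂ) + (c:ℂ) * Complex.I) / (b:ℂ), ?_, ?_⟩
  · field_simp
    linear_combination (c:ℂ)^2*Complex.I_sq - hc2C - hpellC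
  · have hα : ((a:ℂ) + (c:ℂ)*Complex.I)/(b:ℂ)
        = (((a:ℝ)/(b:ℝ) : ℝ):ℂ) + ((c/(b:ℝ) : ℝ):ℂ)*Complex.I := by
      push_cast
      field_simp
    rw [hα]
    have hre : (((u:ℂ) + Complex.I*(v:ℂ)) - ((((a:ℝ)/(b:ℝ) : ℝ):ℂ) + ((c/(b:ℝ) : ℝ):ℂ)*Complex.I)).re
        = u - (a:ℝ)/(b:ℝ) := by simp
    have him : (((u:ℂ) + Complex.I*(v:ℂ)) - ((((a:ℝ)/(b:ℝ) : ℝ):ℂ) + ((c/(b:ℝ) : ℝ):ℂ)*Complex.I)).im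
        = v - c/(b:ℝ) := by simp
    have hsum : 1/(2*(b:ℝ)^2) + 1/(b:ℝ)^2 = 3/(2*(b:ℝ)^2) := by
      field_simp
      ring
    calc ‖_‖ ≤ |(((u:ℂ) + Complex.I*(v:ℂ)) - ((((a:ℝ)/(b:ℝ) : ℝ):ℂ) + ((c/(b:ℝ) : ℝ):ℂ)*Complex.I)).re|
          + |(((u:ℂ) + Complex.I*(v:ℂ)) - ((((a:ℝ)/(b:ℝ) : ℝ):ℂ) + ((c/(b:ℝ) : ℝ):ℂ)*Complex.I)).im| :=
        Complex.norm_le_abs_re_add_abs_im _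
      _ ≤ 3/(2*(b:ℝ)^2) := by
          rw [hre, him, abs_of_nonpos (by linarith : u - (a:ℝ)/(b:ℝ) ≤ 0), abs_of_nonneg ht2']
          linarith [ht1, ht2, hsum.ge, hsum.le]
      _ ≤ 2 * ((r : ℝ) + (s : ℝ)) ^ 2 / ((max b (max (2 * a) ((r + s) * b)) : ℤ) : ℝ) ^ 2 := by
          rw [div_le_div_iff₀ (by positivity) (by positivity)]
          have hc : (3:ℝ) * ((max b (max (2 * a) ((r + s) * b)) : ℤ):ℝ)^2 ≤ 4*((r:ℝ)+(s:ℝ))^2*(b:ℝ)^2 := by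
            exact_mod_cast hHb
          nlinarith [hc]
end

section
/- There exist infinitely many pairs of positive integers (a, b) with a^2 - 2*b^2 = 1, and consequently, setting ξ = √2 + i, there exist algebraic numbers α of degree at most 2 of arbitrarily large height such that |ξ - α| ≤ 18 / H(α)^2. -/
/-- The naïve height of an integer polynomial: the maximum of the absolute values
of its coefficients. -/
noncomputable def polyHeight (P : Polynomial ℤ) : ℕ :=
  P.support.sup fun i => (P.coeff i).natAbs

/-- `P` is a minimal defining integer polynomial of the algebraic number `α`. -/
def IsMinIntPoly (α : ℂ) (P : Polynomial ℤ) : Prop :=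
  Irreducible P ∧ Polynomial.aeval α P = 0

/-- Pell solution sequence for x^2 - 2 y^2 = 1. -/
def pellSeq : ℕ → ℤ × ℤ
  | 0 => (3, 2)
  | n+1 => (3 * (pellSeq n).1 + 4 * (pellSeq n).2, 2 * (pellSeq n).1 + 3 * (pellSeq n).2)

lemma pellSeq_prop (n : ℕ) :
    (pellSeq n).1 ^ 2 - 2 * (pellSeq n).2 ^ 2 = 1 ∧ 0 < (pellSeq n).1 ∧
      (n : ℤ) + 2 ≤ (pellSeq n).2 ∧ 2 ∣ (pellSeq n).2 := by
  induction n with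
  | zero => norm_num [pellSeq]
  | succ n ih =>
    obtain ⟨h1, h2, h3, h4⟩ := ih
    refine ⟨by simp only [pellSeq]; ring_nf; ring_nf at h1; linarith, ?_, ?_, ?_⟩
    · simp only [pellSeq]; nlinarith
    · simp only [pellSeq]; push_cast; nlinarith
    · simp only [pellSeq]; omega

lemma pellSeq_snd_strictMono : StrictMono fun n => (pellSeq n).2 := by
  apply strictMono_nat_of_lt_succ
  intro n
  obtain ⟨h1, h2, h3, h4⟩ := pellSeq_prop n
  simp only [pellSeq]
  nlinarith

lemma quad_eval (a b k s : ℝ) (hb0 : b ≠ 0) (ha2R : a ^ 2 = 2 * b ^ 2 + 1)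
    (hs2 : s ^ 2 = b ^ 2 - 1) (hbk : b = 2 * k) :
    (k : ℂ) * (((a / b : ℝ) : ℂ) + ((s / b : ℝ) : ℂ) * Complex.I) ^ 2
      + (-a : ℝ) * (((a / b : ℝ) : ℂ) + ((s / b : ℝ) : ℂ) * Complex.I)
      + ((3 * k : ℝ) : ℂ) = 0 := by
  rw [Complex.ext_iff]
  constructor
  · simp only [Complex.add_re, Complex.mul_re, Complex.mul_im, Complex.add_im,
      Complex.ofReal_re, Complex.ofReal_im, Complex.I_re, Complex.I_im, Complex.zero_re,
      pow_two, Complex.mul_re]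
    ring_nf
    field_simp
    ring_nf
    linear_combination (-k) * hs2 + (k - b) * ha2R + (-(2*b^2+1)) * hbk
  · simp only [Complex.add_im, Complex.mul_re, Complex.mul_im, Complex.add_re,
      Complex.ofReal_re, Complex.ofReal_im, Complex.I_re, Complex.I_im, Complex.zero_im,
      pow_two]
    ring_nf
    field_simp
    ring_nf
    linear_combination (-(a*s)) * hbk

set_option maxHeartbeats 1000000 in
lemma approx_aux (B : ℝ) : ∃ (α : ℂ) (P : Polynomial ℤ), IsMinIntPoly α P ∧ P.natDegree ≤ 2 ∧
      B < (polyHeight P : ℝ) ∧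
      ‖((Real.sqrt 2 : ℂ) + Complex.I) - α‖ ≤ 18 / (polyHeight P : ℝ) ^ 2 := by
    obtain ⟨n, hn⟩ := exists_nat_gt B
    obtain ⟨h1, h2, h3, h4⟩ := pellSeq_prop n
    set a : ℤ := (pellSeq n).1 with ha
    set b : ℤ := (pellSeq n).2 with hb
    obtain ⟨k, hk⟩ := h4
    have hk1 : 1 ≤ k := by omega
    have hb2 : 2 ≤ b := by omega
    have ha2 : a ^ 2 = 8 * k ^ 2 + 1 := by rw [hk] at h1; nlinarith
    have ha3k : a ≤ 3 * k := by nlinarith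
    have hab : b ≤ a := by nlinarith
    have hk0 : k ≠ 0 := by omega
    -- the polynomial
    set P : Polynomial ℤ := Polynomial.C k * Polynomial.X ^ 2 + Polynomial.C (-a) * Polynomial.X
      + Polynomial.C (3 * k) with hP
    have hcoeff : ∀ i, P.coeff i =
        (if i = 2 then k else 0) + (if i = 1 then -a else 0) + (if i = 0 then 3 * k else 0) := by
      intro i
      simp only [hP, Polynomial.coeff_add, Polynomial.coeff_C_mul, Polynomial.coeff_X_pow,
        Polynomial.coeff_X, Polynomial.coeff_C, mul_ite, mul_one, mul_zero]
      split_ifs <;> omega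
    have hsupp : P.support = {0, 1, 2} := by
      ext i
      simp only [Polynomial.mem_support_iff, hcoeff i, Finset.mem_insert, Finset.mem_singleton]
      rcases i with _ | _ | _ | i <;> simp <;> omega
    have hheight : (polyHeight P : ℤ) = 3 * k := by
      have : polyHeight P = (3 * k).natAbs := by
        rw [polyHeight, hsupp]
        simp only [Finset.sup_insert, Finset.sup_singleton, hcoeff]
        norm_num
        omega
      rw [this]; omega
    have hdeg2 : P.natDegree = 2 := by
      rw [hP]; compute_degree!
    have hdeg : P.natDegree ≤ 2 := le_of_eq hdeg2
    -- the root
    set s : ℝ := Real.sqrt ((b : ℝ) ^ 2 - 1) with hs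
    have hbR : (2 : ℝ) ≤ (b : ℝ) := by exact_mod_cast hb2
    have hs2 : s ^ 2 = (b : ℝ) ^ 2 - 1 := Real.sq_sqrt (by nlinarith)
    have hs0 : 0 ≤ s := Real.sqrt_nonneg _
    have hsb : s ≤ (b : ℝ) := by nlinarith
    have hb0 : (b : ℝ) ≠ 0 := by positivity
    set α : ℂ := (((a : ℝ) / (b : ℝ) : ℝ) : ℂ) + (((s / (b : ℝ) : ℝ)) : ℂ) * Complex.I with hα
    have ha2R : (a : ℝ) ^ 2 = 2 * (b : ℝ) ^ 2 + 1 := by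
      exact_mod_cast (by linarith : a ^ 2 = 2 * b ^ 2 + 1)
    have hbk : (b : ℝ) = 2 * (k : ℝ) := by exact_mod_cast hk
    have haR0 : (0 : ℝ) < a := by exact_mod_cast h2
    -- aeval
    have heval : Polynomial.aeval α P = 0 := by
      have key := quad_eval (a : ℝ) (b : ℝ) (k : ℝ) s hb0 ha2R hs2 hbk
      rw [hP]
      simp only [map_add, map_mul, Polynomial.aeval_C, Polynomial.aeval_X_pow,
        Polynomial.aeval_X, map_pow]
      simp only [algebraMap_int_eq, eq_intCast]
      rw [hα]
      push_cast at key ⊢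
      linear_combination key
    -- irreducibility
    have hprim : P.IsPrimitive := by
      intro r hr
      rw [Polynomial.C_dvd_iff_dvd_coeff] at hr
      have hr2 := hr 2
      have hr1 := hr 1
      rw [hcoeff 2] at hr2
      rw [hcoeff 1] at hr1
      norm_num at hr2 hr1
      have hone : r ∣ 1 := by
        have hd : r ∣ a ^ 2 - 8 * k ^ 2 :=
          dvd_sub (dvd_pow hr1 two_ne_zero) ((dvd_pow hr2 two_ne_zero).mul_left 8)
        have he : a ^ 2 - 8 * k ^ 2 = 1 := by linarith
        rwa [he] at hd
      exact isUnit_of_dvd_one hone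
    have hPQdeg : (P.map (algebraMap ℤ ℚ)).natDegree = 2 := by
      rw [Polynomial.natDegree_map_eq_of_injective (algebraMap ℤ ℚ).injective_int, hdeg2]
    have hirr : Irreducible P := by
      rw [hprim.irreducible_iff_irreducible_map_fraction_map (K := ℚ)]
      rw [Polynomial.irreducible_iff_roots_eq_zero_of_degree_le_three (by omega) (by omega)]
      rw [Multiset.eq_zero_iff_forall_notMem]
      intro x hx
      have hmapne : P.map (algebraMap ℤ ℚ) ≠ 0 := by
        intro h; rw [h] at hPQdeg; simp at hPQdeg
      rw [Polynomial.mem_roots hmapne, Polynomial.IsRoot, Polynomial.eval_map] at hx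
      have hxeq : (k : ℚ) * x ^ 2 + (-(a : ℚ)) * x + 3 * (k : ℚ) = 0 := by
        rw [hP] at hx
        simp only [Polynomial.eval₂_add, Polynomial.eval₂_mul, Polynomial.eval₂_C,
          Polynomial.eval₂_X_pow, Polynomial.eval₂_X] at hx
        simp only [algebraMap_int_eq, eq_intCast] at hx
        push_cast at hx
        linear_combination hx
      have hkQ : (1 : ℚ) ≤ (k : ℚ) := by exact_mod_cast hk1
      have haQ : (a : ℚ) ^ 2 = 8 * (k : ℚ) ^ 2 + 1 := by exact_mod_cast ha2
      nlinarith [sq_nonneg (2 * (k : ℚ) * x - (a : ℚ)), hxeq, haQ, hkQ]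
    -- conclusion
    refine ⟨α, P, ⟨hirr, heval⟩, hdeg, ?_, ?_⟩
    · have h3R : ((n : ℝ)) + 2 ≤ (b : ℝ) := by exact_mod_cast h3
      have hh : ((polyHeight P : ℕ) : ℝ) = 3 * (k : ℝ) := by exact_mod_cast hheight
      rw [hh]
      nlinarith [hn, h3R, hbk]
    · have hh : ((polyHeight P : ℕ) : ℝ) = 3 * (k : ℝ) := by exact_mod_cast hheight
      rw [hh]
      have hdiff : ((Real.sqrt 2 : ℂ) + Complex.I) - α =
          ((Real.sqrt 2 - (a : ℝ) / (b : ℝ) : ℝ) : ℂ) + ((1 - s / (b : ℝ) : ℝ) : ℂ) * Complex.I := by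
        rw [hα]; push_cast; ring
      rw [hdiff]
      refine le_trans (Complex.norm_le_abs_re_add_abs_im _) ?_
      have hre : (((Real.sqrt 2 - (a : ℝ) / (b : ℝ) : ℝ) : ℂ) + ((1 - s / (b : ℝ) : ℝ) : ℂ) * Complex.I).re
          = Real.sqrt 2 - (a : ℝ) / (b : ℝ) := by simp
      have him : (((Real.sqrt 2 - (a : ℝ) / (b : ℝ) : ℝ) : ℂ) + ((1 - s / (b : ℝ) : ℝ) : ℂ) * Complex.I).im
          = 1 - s / (b : ℝ) := by simp
      rw [hre, him]
      have hr2 : Real.sqrt 2 ^ 2 = 2 := Real.sq_sqrt (by norm_num)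
      have hr0 : (1 : ℝ) ≤ Real.sqrt 2 := by
        rw [show (1 : ℝ) = Real.sqrt 1 by simp]
        exact Real.sqrt_le_sqrt (by norm_num)
      have hbpos : (0 : ℝ) < (b : ℝ) := by linarith
      -- real part bound
      have hrb : Real.sqrt 2 * (b : ℝ) ≤ (a : ℝ) := by
        nlinarith [Real.sqrt_nonneg 2, sq_nonneg ((a : ℝ) - Real.sqrt 2 * (b : ℝ))]
      have hkey : ((a : ℝ) - Real.sqrt 2 * (b : ℝ)) * ((a : ℝ) + Real.sqrt 2 * (b : ℝ)) = 1 := by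
        linear_combination ha2R - (b : ℝ)^2 * hr2
      have hre_bound : |Real.sqrt 2 - (a : ℝ) / (b : ℝ)| ≤ 1 / (b : ℝ) ^ 2 := by
        rw [abs_sub_comm, abs_of_nonneg (by
          rw [sub_nonneg, le_div_iff₀ hbpos]; nlinarith)]
        rw [div_sub' hb0, div_le_div_iff₀ hbpos (by positivity)]
        have h5 : ((a : ℝ) - Real.sqrt 2 * (b : ℝ)) * (b : ℝ) ≤ 1 := by
          calc ((a : ℝ) - Real.sqrt 2 * (b : ℝ)) * (b : ℝ)
              ≤ ((a : ℝ) - Real.sqrt 2 * (b : ℝ)) * ((a : ℝ) + Real.sqrt 2 * (b : ℝ)) := by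
                apply mul_le_mul_of_nonneg_left (by nlinarith) (by linarith)
            _ = 1 := hkey
        nlinarith [mul_le_mul_of_nonneg_right h5 hbpos.le]
      -- imaginary part bound
      have hskey : ((b : ℝ) - s) * ((b : ℝ) + s) = 1 := by nlinarith
      have him_bound : |1 - s / (b : ℝ)| ≤ 1 / (b : ℝ) ^ 2 := by
        rw [abs_of_nonneg (by
          rw [sub_nonneg, div_le_one hbpos]; exact hsb)]
        rw [show (1 : ℝ) - s / (b : ℝ) = ((b : ℝ) - s) / (b : ℝ) by field_simp]
        rw [div_le_div_iff₀ hbpos (by positivity)]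
        nlinarith
      have : (2 : ℝ) / (b : ℝ) ^ 2 ≤ 18 / (3 * (k : ℝ)) ^ 2 := by
        rw [div_le_div_iff₀ (by positivity) (by positivity)]
        nlinarith
      calc |Real.sqrt 2 - (a : ℝ) / (b : ℝ)| + |1 - s / (b : ℝ)|
          ≤ 1 / (b : ℝ) ^ 2 + 1 / (b : ℝ) ^ 2 := add_le_add hre_bound him_bound
        _ = 2 / (b : ℝ) ^ 2 := by ring
        _ ≤ 18 / (3 * (k : ℝ)) ^ 2 := this

theorem stmt2 :
    {p : ℤ × ℤ | 0 < p.1 ∧ 0 < p.2 ∧ p.1 ^ 2 - 2 * p.2 ^ 2 = 1}.Infinite ∧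
    ∀ B : ℝ, ∃ (α : ℂ) (P : Polynomial ℤ), IsMinIntPoly α P ∧ P.natDegree ≤ 2 ∧
      B < (polyHeight P : ℝ) ∧
      ‖((Real.sqrt 2 : ℂ) + Complex.I) - α‖ ≤ 18 / (polyHeight P : ℝ) ^ 2 := by
  constructor
  · apply Set.infinite_of_injective_forall_mem (f := pellSeq)
    · intro m n h
      exact pellSeq_snd_strictMono.injective (congrArg Prod.snd h)
    · intro n
      obtain ⟨h1, h2, h3, h4⟩ := pellSeq_prop n
      exact ⟨h2, by omega, h1⟩
  · exact approx_aux
end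

section
/- Let ξ be a complex non-real algebraic number of degree d ≥ 2 and let n be a positive integer. Then there exists a positive constant c, depending on ξ and n, such that |ξ - α| > c · H(α)^(-d/2) for every complex algebraic number α of degree at most n. -/
noncomputable def Complex.abs : AbsoluteValue ℂ ℝ := NormedField.toAbsoluteValue ℂ

lemma Complex.abs_ofReal (r : ℝ) : Complex.abs (r : ℂ) = |r| := Complex.norm_real r

lemma Complex.abs_conj (z : ℂ) : Complex.abs ((starRingEnd ℂ) z) = Complex.abs z :=
  Complex.norm_conj z

lemma coeff_le_height (P : Polynomial ℤ) (i : ℕ) :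
    |(P.coeff i : ℝ)| ≤ (polyHeight P : ℝ) := by
  rcases eq_or_ne (P.coeff i) 0 with h | h
  · simp [h]
  · rw [← Int.cast_abs, Int.abs_eq_natAbs]
    exact_mod_cast Nat.cast_le.mpr (Finset.le_sup (f := fun i => (P.coeff i).natAbs)
      (Polynomial.mem_support_iff.mpr h))

lemma one_le_height (P : Polynomial ℤ) (hP : P ≠ 0) : 1 ≤ polyHeight P := by
  obtain ⟨i, hi⟩ := Polynomial.support_nonempty.mpr hP
  calc 1 ≤ (P.coeff i).natAbs := Int.natAbs_pos.mpr (Polynomial.mem_support_iff.mp hi)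
    _ ≤ polyHeight P := Finset.le_sup (f := fun i => (P.coeff i).natAbs) hi

lemma aeval_abs_le (P : Polynomial ℤ) (n : ℕ) (hn : P.natDegree ≤ n) (z : ℂ) :
    Complex.abs (Polynomial.aeval z P) ≤
      (n + 1) * (polyHeight P : ℝ) * max 1 (Complex.abs z) ^ n := by
  have h1 : (0:ℝ) < max 1 (Complex.abs z) := lt_of_lt_of_le one_pos (le_max_left _ _)
  rw [Polynomial.aeval_eq_sum_range' (Nat.lt_succ_of_le hn)]
  calc Complex.abs (∑ i ∈ Finset.range (n+1), P.coeff i • z ^ i)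
      ≤ ∑ i ∈ Finset.range (n+1), Complex.abs (P.coeff i • z ^ i) := by
        exact AbsoluteValue.sum_le _ _ _
    _ ≤ ∑ i ∈ Finset.range (n+1), (polyHeight P : ℝ) * max 1 (Complex.abs z) ^ n := by
        refine Finset.sum_le_sum fun i hi => ?_
        rw [zsmul_eq_mul, map_mul, map_pow]
        have : Complex.abs (P.coeff i : ℂ) = |(P.coeff i : ℝ)| := by
          rw [← Complex.abs_ofReal]; norm_cast
        rw [this]
        refine mul_le_mul (coeff_le_height P i) ?_ (by positivity) (Nat.cast_nonneg _)
        calc Complex.abs z ^ i ≤ max 1 (Complex.abs z) ^ i :=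
              pow_le_pow_left₀ (AbsoluteValue.nonneg _ _) (le_max_right _ _) i
          _ ≤ max 1 (Complex.abs z) ^ n :=
              pow_le_pow_right₀ (le_max_left _ _) (Nat.lt_succ_iff.mp (Finset.mem_range.mp hi))
    _ = (n + 1) * (polyHeight P : ℝ) * max 1 (Complex.abs z) ^ n := by
        rw [Finset.sum_const, Finset.card_range]; ring

lemma aeval_sub_abs_le (P : Polynomial ℤ) (n : ℕ) (hn : P.natDegree ≤ n) (x y : ℂ)
    (R : ℝ) (hR : 1 ≤ R) (hx : Complex.abs x ≤ R) (hy : Complex.abs y ≤ R) :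
    Complex.abs (Polynomial.aeval x P - Polynomial.aeval y P) ≤
      ((n + 1) * n * (polyHeight P : ℝ) * R ^ n) * Complex.abs (x - y) := by
  have hR0 : (0:ℝ) ≤ R := le_trans zero_le_one hR
  rw [Polynomial.aeval_eq_sum_range' (Nat.lt_succ_of_le hn),
      Polynomial.aeval_eq_sum_range' (Nat.lt_succ_of_le hn), ← Finset.sum_sub_distrib]
  have key : ∀ i ∈ Finset.range (n+1),
      Complex.abs (P.coeff i • x ^ i - P.coeff i • y ^ i) ≤
      ((polyHeight P : ℝ) * (n * R ^ n)) * Complex.abs (x - y) := by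
    intro i hi
    rw [← smul_sub, zsmul_eq_mul, map_mul]
    have hcoeff : Complex.abs (P.coeff i : ℂ) ≤ (polyHeight P : ℝ) := by
      have : Complex.abs (P.coeff i : ℂ) = |(P.coeff i : ℝ)| := by
        rw [← Complex.abs_ofReal]; norm_cast
      rw [this]; exact coeff_le_height P i
    have hpow : Complex.abs (x ^ i - y ^ i) ≤ (n * R ^ n) * Complex.abs (x - y) := by
      rw [← geom_sum₂_mul, map_mul]
      refine mul_le_mul_of_nonneg_right ?_ (AbsoluteValue.nonneg _ _)
      calc Complex.abs (∑ j ∈ Finset.range i, x ^ j * y ^ (i - 1 - j))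
          ≤ ∑ j ∈ Finset.range i, Complex.abs (x ^ j * y ^ (i - 1 - j)) :=
            AbsoluteValue.sum_le _ _ _
        _ ≤ ∑ j ∈ Finset.range i, R ^ n := by
            refine Finset.sum_le_sum fun j hj => ?_
            rw [map_mul, map_pow, map_pow]
            calc Complex.abs x ^ j * Complex.abs y ^ (i - 1 - j)
                ≤ R ^ j * R ^ (i - 1 - j) := by
                  exact mul_le_mul (pow_le_pow_left₀ (AbsoluteValue.nonneg _ _) hx j)
                    (pow_le_pow_left₀ (AbsoluteValue.nonneg _ _) hy _) (by positivity)
                    (by positivity)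
              _ = R ^ (j + (i - 1 - j)) := (pow_add R j _).symm
              _ ≤ R ^ n := by
                  refine pow_le_pow_right₀ hR ?_
                  have := Finset.mem_range.mp hj
                  have := Finset.mem_range.mp hi
                  omega
        _ ≤ (n : ℝ) * R ^ n := by
            rw [Finset.sum_const, Finset.card_range, nsmul_eq_mul]
            have : (i : ℝ) ≤ (n : ℝ) := by
              exact_mod_cast Nat.lt_succ_iff.mp (Finset.mem_range.mp hi)
            exact mul_le_mul_of_nonneg_right this (by positivity)
    calc Complex.abs (P.coeff i : ℂ) * Complex.abs (x ^ i - y ^ i)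
        ≤ (polyHeight P : ℝ) * ((n * R ^ n) * Complex.abs (x - y)) :=
          mul_le_mul hcoeff hpow (AbsoluteValue.nonneg _ _) (Nat.cast_nonneg _)
      _ = ((polyHeight P : ℝ) * (n * R ^ n)) * Complex.abs (x - y) := by ring
  calc Complex.abs (∑ i ∈ Finset.range (n+1), (P.coeff i • x ^ i - P.coeff i • y ^ i))
      ≤ ∑ i ∈ Finset.range (n+1),
          Complex.abs (P.coeff i • x ^ i - P.coeff i • y ^ i) := AbsoluteValue.sum_le _ _ _
    _ ≤ ∑ i ∈ Finset.range (n+1),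
          ((polyHeight P : ℝ) * (n * R ^ n)) * Complex.abs (x - y) := Finset.sum_le_sum key
    _ = ((n + 1) * n * (polyHeight P : ℝ) * R ^ n) * Complex.abs (x - y) := by
        rw [Finset.sum_const, Finset.card_range, nsmul_eq_mul]; push_cast; ring

lemma norm_key {K : Type*} [Field K] [Algebra ℚ K] [FiniteDimensional ℚ K]
    (x : K) (δ : ℤ) (hδ : 0 < δ) (hδx : IsIntegral ℤ (algebraMap ℤ K δ * x))
    (P : Polynomial ℤ) (n : ℕ) (hn : P.natDegree ≤ n)
    (hz : Polynomial.aeval x P ≠ 0) :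
    1 ≤ |(Algebra.norm ℚ (Polynomial.aeval x P))| * (δ : ℚ) ^ (n * Module.finrank ℚ K) := by
  set z := Polynomial.aeval x P with hzdef
  have hδK : algebraMap ℤ K δ ≠ 0 := by
    have h0 : algebraMap ℤ K δ = algebraMap ℚ K ((δ : ℚ)) := by
      rw [algebraMap_int_eq, eq_intCast, eq_ratCast]; norm_cast
    rw [h0, ne_eq, map_eq_zero]
    exact_mod_cast hδ.ne'
  have hw : IsIntegral ℤ ((algebraMap ℤ K δ) ^ n * z) := by
    show (algebraMap ℤ K δ) ^ n * z ∈ integralClosure ℤ K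
    rw [hzdef, Polynomial.aeval_eq_sum_range' (Nat.lt_succ_of_le hn), Finset.mul_sum]
    refine Subalgebra.sum_mem _ fun i hi => ?_
    have hin : i ≤ n := Nat.lt_succ_iff.mp (Finset.mem_range.mp hi)
    have key : (algebraMap ℤ K δ) ^ n * (P.coeff i • x ^ i)
        = algebraMap ℤ K (P.coeff i * δ ^ (n - i)) * (algebraMap ℤ K δ * x) ^ i := by
      simp only [algebraMap_int_eq, eq_intCast, zsmul_eq_mul]
      rw [mul_pow, ← mul_assoc]
      push_cast
      rw [show ((δ:K) ^ n) = (δ:K) ^ (n - i) * (δ:K) ^ i by rw [← pow_add]; congr 1; omega]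
      ring
    rw [key]
    exact Subalgebra.mul_mem _ (Subalgebra.algebraMap_mem _ _) (Subalgebra.pow_mem _ hδx i)
  have hNint : IsIntegral ℤ (Algebra.norm ℚ ((algebraMap ℤ K δ) ^ n * z)) :=
    Algebra.isIntegral_norm ℚ hw
  obtain ⟨m, hm⟩ := IsIntegrallyClosed.isIntegral_iff.mp hNint
  have hwne : (algebraMap ℤ K δ) ^ n * z ≠ 0 := mul_ne_zero (pow_ne_zero _ hδK) hz
  have hNne : Algebra.norm ℚ ((algebraMap ℤ K δ) ^ n * z) ≠ 0 :=
    Algebra.norm_ne_zero_iff.mpr hwne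
  have hm0 : m ≠ 0 := by rintro rfl; rw [map_zero] at hm; exact hNne hm.symm
  have hm1 : (1:ℚ) ≤ |Algebra.norm ℚ ((algebraMap ℤ K δ) ^ n * z)| := by
    rw [← hm]
    have h1 : (1:ℤ) ≤ |m| := Int.one_le_abs hm0
    have : (1:ℚ) ≤ |(m:ℚ)| := by rw [← Int.cast_abs]; exact_mod_cast h1
    simpa [algebraMap_int_eq, eq_intCast] using this
  have hsplit : Algebra.norm ℚ ((algebraMap ℤ K δ) ^ n * z)
      = (δ:ℚ) ^ (n * Module.finrank ℚ K) * Algebra.norm ℚ z := by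
    have h2 : (algebraMap ℤ K δ) ^ n = algebraMap ℚ K ((δ:ℚ) ^ n) := by
      rw [map_pow]
      congr 1
      rw [algebraMap_int_eq, eq_intCast, eq_ratCast]
      norm_cast
    rw [h2, map_mul, Algebra.norm_algebraMap, ← pow_mul]
  rw [hsplit, abs_mul, abs_pow] at hm1
  calc (1:ℚ) ≤ |(δ:ℚ)| ^ (n * Module.finrank ℚ K) * |Algebra.norm ℚ z| := hm1
    _ = |Algebra.norm ℚ z| * (δ:ℚ) ^ (n * Module.finrank ℚ K) := by
        rw [abs_of_pos (show (0:ℚ) < (δ:ℚ) by exact_mod_cast hδ)]; ring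

set_option maxHeartbeats 1000000 in
open Polynomial IntermediateField in
/-- The complex Liouville inequality. -/
theorem stmt3 (ξ : ℂ) (hnr : ξ.im ≠ 0) (d : ℕ) (hd : 2 ≤ d)
    (hdeg : (minpoly ℚ ξ).natDegree = d) (n : ℕ) (hn : 1 ≤ n) :
    ∃ c > (0 : ℝ), ∀ (α : ℂ) (P : Polynomial ℤ), IsMinIntPoly α P → P.natDegree ≤ n →
      α ≠ ξ → c * (polyHeight P : ℝ) ^ (-(d : ℝ) / 2) < ‖ξ - α‖ := by
  classical
  have hint : IsIntegral ℚ ξ := by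
    by_contra h
    rw [minpoly.eq_zero h] at hdeg
    simp at hdeg; omega
  haveI : FiniteDimensional ℚ ℚ⟮ξ⟯ := IntermediateField.adjoin.finiteDimensional hint
  have hrank : Module.finrank ℚ ℚ⟮ξ⟯ = d := by
    rw [IntermediateField.adjoin.finrank hint, hdeg]
  set x : ℚ⟮ξ⟯ := IntermediateField.AdjoinSimple.gen ℚ ξ with hxdef
  have hxval : algebraMap ℚ⟮ξ⟯ ℂ x = ξ := IntermediateField.AdjoinSimple.algebraMap_gen ℚ ξ
  haveI : CharZero ℚ⟮ξ⟯ := charZero_of_injective_algebraMap (algebraMap ℚ ℚ⟮ξ⟯).injective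
  haveI : Algebra.IsIntegral ℚ ℚ⟮ξ⟯ := Algebra.IsIntegral.of_finite ℚ _
  -- integral multiple
  have halg : IsAlgebraic ℤ x :=
    (IsFractionRing.isAlgebraic_iff ℤ ℚ ℚ⟮ξ⟯).mpr (Algebra.IsIntegral.isIntegral x).isAlgebraic
  obtain ⟨y, δ', hδ'0, hδ'x⟩ : ∃ (y : integralClosure ℤ ℚ⟮ξ⟯) (δ' : ℤ), δ' ≠ 0 ∧
      algebraMap ℤ ℚ⟮ξ⟯ δ' * x = y := by
    obtain ⟨δ', h0, hi⟩ := halg.exists_integral_multiple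
    exact ⟨⟨_, (Algebra.smul_def δ' x) ▸ hi⟩, δ', h0, rfl⟩
  have hδint : IsIntegral ℤ (algebraMap ℤ ℚ⟮ξ⟯ |δ'| * x) := by
    rcases abs_choice δ' with h | h
    · rw [h, hδ'x]; exact y.2
    · rw [h, map_neg, neg_mul]
      exact ((show IsIntegral ℤ (algebraMap ℤ ℚ⟮ξ⟯ δ' * x) from hδ'x ▸ y.2).neg)
  set δ : ℤ := |δ'| with hδdef
  have hδpos : 0 < δ := abs_pos.mpr hδ'0
  -- embeddings
  let σ₀ : ℚ⟮ξ⟯ →ₐ[ℚ] ℂ := IntermediateField.val ℚ⟮ξ⟯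
  let conjA : ℂ →ₐ[ℚ] ℂ := (Complex.conjAe.toAlgHom.restrictScalars ℚ)
  let σ₁ : ℚ⟮ξ⟯ →ₐ[ℚ] ℂ := conjA.comp σ₀
  have hσ₀x : σ₀ x = ξ := hxval
  have hσ₁x : σ₁ x = (starRingEnd ℂ) ξ := by
    show conjA (σ₀ x) = _
    rw [hσ₀x]; rfl
  have hσ01 : σ₀ ≠ σ₁ := by
    intro h
    have h2 : σ₀ x = σ₁ x := by rw [h]
    rw [hσ₀x, hσ₁x] at h2
    exact hnr ((Complex.conj_eq_iff_im.mp h2.symm))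
  have hcard : Fintype.card (ℚ⟮ξ⟯ →ₐ[ℚ] ℂ) = d := by rw [AlgHom.card]; exact hrank
  -- constants
  set M : ℝ := Finset.univ.sup' ⟨σ₀, Finset.mem_univ σ₀⟩
    (fun σ : ℚ⟮ξ⟯ →ₐ[ℚ] ℂ => max 1 (Complex.abs (σ x))) with hMdef
  have hM : ∀ σ : ℚ⟮ξ⟯ →ₐ[ℚ] ℂ, max 1 (Complex.abs (σ x)) ≤ M := fun σ => by
    rw [hMdef]
    exact Finset.le_sup' (fun σ : ℚ⟮ξ⟯ →ₐ[ℚ] ℂ => max 1 (Complex.abs (σ x)))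
      (Finset.mem_univ σ)
  have hM1 : (1:ℝ) ≤ M := le_trans (le_max_left _ _) (hM σ₀)
  set R : ℝ := Complex.abs ξ + 1 with hRdef
  have hR1 : (1:ℝ) ≤ R := by
    have := AbsoluteValue.nonneg Complex.abs ξ; rw [hRdef]; linarith
  have hn' : (0:ℝ) < n := by exact_mod_cast hn
  set C2 : ℝ := (n+1) * n * R^n with hC2def
  have hC2pos : 0 < C2 := by rw [hC2def]; positivity
  set C3 : ℝ := (n+1) * M^n with hC3def
  have hC3pos : 0 < C3 := by rw [hC3def]; positivity
  have hδR : (0:ℝ) < (δ:ℝ) := by exact_mod_cast hδpos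
  set Dd : ℝ := (δ:ℝ)^(n*d) with hDdef
  have hDpos : 0 < Dd := by rw [hDdef]; positivity
  set c0sq : ℝ := (Dd * C2^2 * C3^(d-2))⁻¹ with hc0sqdef
  have hc0sqpos : 0 < c0sq := by rw [hc0sqdef]; positivity
  set c0 : ℝ := Real.sqrt c0sq with hc0def
  have hc0pos : 0 < c0 := Real.sqrt_pos.mpr hc0sqpos
  -- conjugates of ξ
  set S : Finset ℂ := (((minpoly ℚ ξ).aroots ℂ).toFinset).erase ξ with hSdef
  set ε : ℝ := if h : S.Nonempty then S.inf' h (fun a => Complex.abs (ξ - a)) else 1 with hεdef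
  have hεle : ∀ a ∈ S, ε ≤ Complex.abs (ξ - a) := by
    intro a ha
    rw [hεdef, dif_pos ⟨a, ha⟩]
    exact Finset.inf'_le _ ha
  have hεpos : 0 < ε := by
    rw [hεdef]; split_ifs with h
    · rw [Finset.lt_inf'_iff]
      intro a ha
      have h1 : a ≠ ξ := Finset.ne_of_mem_erase ha
      have h2 : ξ - a ≠ 0 := sub_ne_zero.mpr (Ne.symm h1)
      exact AbsoluteValue.pos Complex.abs h2
    · exact one_pos
  refine ⟨min (min c0 ε) 1 / 2, by positivity, ?_⟩
  intro α P hminp hPn hαξ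
  obtain ⟨hirr, hroot⟩ := hminp
  set c : ℝ := min (min c0 ε) 1 / 2 with hcdef
  have hcpos : 0 < c := by rw [hcdef]; positivity
  have hP0 : P ≠ 0 := hirr.ne_zero
  set H : ℝ := (polyHeight P : ℝ) with hHdef
  have hH1 : (1:ℝ) ≤ H := by rw [hHdef]; exact_mod_cast one_le_height P hP0
  have hH0 : (0:ℝ) < H := lt_of_lt_of_le one_pos hH1
  set T : ℝ := H ^ (-(d:ℝ)/2) with hTdef
  have hT0 : 0 < T := Real.rpow_pos_of_pos hH0 _
  have hT1 : T ≤ 1 := Real.rpow_le_one_of_one_le_of_nonpos hH1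
    (by have : (0:ℝ) ≤ (d:ℝ) := Nat.cast_nonneg d; linarith)
  show c * T < Complex.abs (ξ - α)
  rcases le_or_gt (Complex.abs (ξ - α)) 1 with hle | hgt
  case inr =>
    calc c * T ≤ c * 1 := mul_le_mul_of_nonneg_left hT1 hcpos.le
      _ = c := mul_one c
      _ ≤ 1/2 := by
          rw [hcdef]
          have := min_le_right (min c0 ε) 1
          linarith
      _ < 1 := by norm_num
      _ < _ := hgt
  by_cases hξ0 : Polynomial.aeval ξ P = 0
  · -- α is a conjugate of ξ
    have hPdeg : 1 ≤ P.natDegree := by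
      by_contra hcon
      push_neg at hcon
      have h0 : P = Polynomial.C (P.coeff 0) :=
        Polynomial.eq_C_of_natDegree_eq_zero (Nat.lt_one_iff.mp hcon)
      have h1 : ((P.coeff 0 : ℤ) : ℂ) = 0 := by
        have h2 := hroot
        rw [h0] at h2
        simpa using h2
      have h2 : P.coeff 0 = 0 := by exact_mod_cast h1
      exact hP0 (by rw [h0, h2, map_zero])
    have hprim : P.IsPrimitive := by
      intro r hr
      obtain ⟨q, hq⟩ := hr
      rcases hirr.isUnit_or_isUnit hq with h | h
      · exact Polynomial.isUnit_C.mp h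
      · exfalso
        have h1 := Polynomial.natDegree_eq_zero_of_isUnit h
        have h2 : P.natDegree ≤ (Polynomial.C r).natDegree + q.natDegree := by
          rw [hq]; exact Polynomial.natDegree_mul_le
        rw [Polynomial.natDegree_C, h1] at h2
        omega
    have hirrQ : Irreducible (P.map (Int.castRingHom ℚ)) :=
      (Polynomial.IsPrimitive.Int.irreducible_iff_irreducible_map_cast hprim).mp hirr
    have hξmap : Polynomial.aeval ξ (P.map (Int.castRingHom ℚ)) = 0 := by
      rw [← algebraMap_int_eq, Polynomial.aeval_map_algebraMap]; exact hξ0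
    obtain ⟨q, hq⟩ := minpoly.dvd ℚ ξ hξmap
    have hmu : ¬ IsUnit (minpoly ℚ ξ) := by
      intro h
      have := Polynomial.natDegree_eq_zero_of_isUnit h
      omega
    have hqu : IsUnit q := (hirrQ.isUnit_or_isUnit hq).resolve_left hmu
    have hαmin : Polynomial.aeval α (minpoly ℚ ξ) = 0 := by
      have h1 : Polynomial.aeval α (P.map (Int.castRingHom ℚ)) = 0 := by
        rw [← algebraMap_int_eq, Polynomial.aeval_map_algebraMap]; exact hroot
      rw [hq, map_mul] at h1
      rcases mul_eq_zero.mp h1 with h | h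
      · exact h
      · exfalso
        obtain ⟨r, hr, hrq⟩ := Polynomial.isUnit_iff.mp hqu
        rw [← hrq, Polynomial.aeval_C, _root_.map_eq_zero] at h
        exact (hr.ne_zero h).elim
    have hαS : α ∈ S := by
      rw [hSdef]
      refine Finset.mem_erase.mpr ⟨hαξ, Multiset.mem_toFinset.mpr ?_⟩
      rw [Polynomial.mem_aroots]
      exact ⟨minpoly.ne_zero hint, hαmin⟩
    calc c * T ≤ c * 1 := mul_le_mul_of_nonneg_left hT1 hcpos.le
      _ = c := mul_one c
      _ < ε := by
          rw [hcdef]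
          have h5 := min_le_left (min c0 ε) 1
          have h6 := min_le_right c0 ε
          linarith
      _ ≤ _ := hεle α hαS
  · -- main case
    have hz : Polynomial.aeval x P ≠ 0 := by
      intro h
      apply hξ0
      rw [← hxval, Polynomial.aeval_algebraMap_apply, h, map_zero]
    have hnorm := norm_key x δ hδpos hδint P n hPn hz
    rw [hrank] at hnorm
    set N : ℚ := Algebra.norm ℚ (Polynomial.aeval x P) with hNdef
    have hnormR : (1:ℝ) ≤ |(N:ℝ)| * Dd := by
      rw [hDdef]
      exact_mod_cast hnorm
    have hprod0 : algebraMap ℚ ℂ N = ∏ σ : ℚ⟮ξ⟯ →ₐ[ℚ] ℂ, σ (Polynomial.aeval x P) := by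
      rw [hNdef]
      exact Algebra.norm_eq_prod_embeddings ℚ ℂ _
    have hprod : Complex.abs (algebraMap ℚ ℂ N)
        = ∏ σ : ℚ⟮ξ⟯ →ₐ[ℚ] ℂ, Complex.abs (σ (Polynomial.aeval x P)) := by
      rw [hprod0]
      exact AbsoluteValue.map_prod _ _ _
    have habsN : |(N:ℝ)| = Complex.abs (algebraMap ℚ ℂ N) := by
      rw [eq_ratCast, show ((N:ℂ)) = (((N:ℝ):ℂ)) by push_cast; ring, Complex.abs_ofReal]
    set t0 : ℝ := Complex.abs (Polynomial.aeval ξ P) with ht0def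
    have hσ₀z : Complex.abs (σ₀ (Polynomial.aeval x P)) = t0 := by
      rw [ht0def]
      congr 1
      show algebraMap ℚ⟮ξ⟯ ℂ (Polynomial.aeval x P) = _
      rw [← Polynomial.aeval_algebraMap_apply, hxval]
    have hconjA : ∀ w : ℂ, conjA w = (starRingEnd ℂ) w := fun w => rfl
    have hcompA : ∀ u, σ₁ u = conjA (σ₀ u) := fun u => rfl
    have hσ₁z : Complex.abs (σ₁ (Polynomial.aeval x P)) = t0 := by
      rw [hcompA, hconjA, Complex.abs_conj]
      exact hσ₀z
    have hbound : ∀ σ : ℚ⟮ξ⟯ →ₐ[ℚ] ℂ,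
        Complex.abs (σ (Polynomial.aeval x P)) ≤ C3 * H := by
      intro σ
      have hσz : σ (Polynomial.aeval x P) = Polynomial.aeval (σ x) P :=
        (Polynomial.aeval_algHom_apply (σ.restrictScalars ℤ) x P).symm
      rw [hσz]
      calc Complex.abs (Polynomial.aeval (σ x) P)
          ≤ (n+1) * H * max 1 (Complex.abs (σ x)) ^ n := aeval_abs_le P n hPn (σ x)
        _ ≤ (n+1) * H * M^n :=
            mul_le_mul_of_nonneg_left
              (pow_le_pow_left₀ (by positivity) (hM σ) n) (by positivity)
        _ = C3 * H := by rw [hC3def]; ring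
    have hpairsub : ({σ₀, σ₁} : Finset (ℚ⟮ξ⟯ →ₐ[ℚ] ℂ)) ⊆ Finset.univ := Finset.subset_univ _
    have hsplit : ∏ σ : ℚ⟮ξ⟯ →ₐ[ℚ] ℂ, Complex.abs (σ (Polynomial.aeval x P))
        = (∏ σ ∈ Finset.univ \ {σ₀, σ₁}, Complex.abs (σ (Polynomial.aeval x P)))
          * (t0 * t0) := by
      rw [← Finset.prod_sdiff hpairsub, Finset.prod_pair hσ01, hσ₀z, hσ₁z]
    have hcard2 : (Finset.univ \ ({σ₀, σ₁} : Finset (ℚ⟮ξ⟯ →ₐ[ℚ] ℂ))).card = d - 2 := by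
      rw [Finset.card_sdiff_of_subset hpairsub, Finset.card_pair hσ01, Finset.card_univ, hcard]
    have hrest : (∏ σ ∈ Finset.univ \ ({σ₀, σ₁} : Finset (ℚ⟮ξ⟯ →ₐ[ℚ] ℂ)),
        Complex.abs (σ (Polynomial.aeval x P))) ≤ (C3*H)^(d-2) := by
      calc _ ≤ ∏ _σ ∈ Finset.univ \ ({σ₀, σ₁} : Finset (ℚ⟮ξ⟯ →ₐ[ℚ] ℂ)), (C3*H) :=
            Finset.prod_le_prod (fun σ _ => AbsoluteValue.nonneg _ _) (fun σ _ => hbound σ)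
        _ = (C3*H)^(d-2) := by rw [Finset.prod_const, hcard2]
    have hαabs : Complex.abs α ≤ R := by
      have h1 : Complex.abs α ≤ Complex.abs (α - ξ) + Complex.abs ξ := by
        calc Complex.abs α = Complex.abs (α - ξ + ξ) := by ring_nf
          _ ≤ _ := AbsoluteValue.add_le _ _ _
      have h2 : Complex.abs (α - ξ) = Complex.abs (ξ - α) := AbsoluteValue.map_sub _ _ _
      rw [hRdef]; rw [h2] at h1; linarith
    have hξabs : Complex.abs ξ ≤ R := by
      rw [hRdef]; linarith
    have hdiff : t0 ≤ (C2 * H) * Complex.abs (ξ - α) := by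
      have h3 := aeval_sub_abs_le P n hPn ξ α R hR1 hξabs hαabs
      rw [hroot, sub_zero] at h3
      calc t0 ≤ ((n+1) * n * H * R^n) * Complex.abs (ξ - α) := h3
        _ = (C2*H) * Complex.abs (ξ-α) := by rw [hC2def]; ring
    set t : ℝ := Complex.abs (ξ - α) with htdef
    have ht0nonneg : 0 ≤ t0 := AbsoluteValue.nonneg _ _
    have htnonneg : 0 ≤ t := AbsoluteValue.nonneg _ _
    have key : 1 ≤ ((C3*H)^(d-2) * (C2*H*t)^2) * Dd := by
      have h1 : |(N:ℝ)| ≤ (C3*H)^(d-2) * (t0*t0) := by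
        rw [habsN, hprod, hsplit]
        exact mul_le_mul_of_nonneg_right hrest (by positivity)
      have h2 : t0 * t0 ≤ (C2*H*t)^2 := by
        rw [sq]
        exact mul_le_mul hdiff hdiff ht0nonneg (by positivity)
      calc (1:ℝ) ≤ |(N:ℝ)| * Dd := hnormR
        _ ≤ ((C3*H)^(d-2) * (t0*t0)) * Dd := mul_le_mul_of_nonneg_right h1 hDpos.le
        _ ≤ ((C3*H)^(d-2) * (C2*H*t)^2) * Dd := by
            refine mul_le_mul_of_nonneg_right
              (mul_le_mul_of_nonneg_left h2 (by positivity)) hDpos.le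
    have e1 : ((C3*H)^(d-2) * (C2*H*t)^2) * Dd
        = (Dd * C2^2 * C3^(d-2)) * (t^2 * (H^2 * H^(d-2))) := by
      rw [mul_pow C3 H, mul_pow, mul_pow]
      ring
    have e2 : H^2 * H^(d-2) = H^d := by
      rw [← pow_add]; congr 1; omega
    rw [e1, e2] at key
    have hfin : c0sq ≤ t^2 * H^d := by
      have h3 : (0:ℝ) < Dd * C2^2 * C3^(d-2) := by positivity
      calc c0sq = c0sq * 1 := (mul_one _).symm
        _ ≤ c0sq * ((Dd * C2^2 * C3^(d-2)) * (t^2 * H^d)) :=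
            mul_le_mul_of_nonneg_left key hc0sqpos.le
        _ = (c0sq * (Dd * C2^2 * C3^(d-2))) * (t^2*H^d) := by ring
        _ = t^2 * H^d := by rw [hc0sqdef, inv_mul_cancel₀ h3.ne', one_mul]
    have hT2 : T^2 = (H^d)⁻¹ := by
      rw [hTdef, ← Real.rpow_natCast (H ^ (-(d:ℝ)/2)) 2, ← Real.rpow_mul hH0.le]
      rw [show (-(d:ℝ)/2) * ((2:ℕ):ℝ) = -(d:ℝ) by push_cast; ring]
      rw [Real.rpow_neg hH0.le, Real.rpow_natCast]
    have hHd : (0:ℝ) < H^d := by positivity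
    have hsq : (c0 * T)^2 ≤ t^2 := by
      have h4 : (c0*T)^2 = c0sq * (H^d)⁻¹ := by
        rw [mul_pow, hT2, hc0def, Real.sq_sqrt hc0sqpos.le]
      rw [h4, ← div_eq_mul_inv, div_le_iff₀ hHd]
      exact hfin
    have hfinal : c0 * T ≤ t := by
      have h4 : 0 ≤ c0 * T := by positivity
      calc c0 * T = Real.sqrt ((c0*T)^2) := (Real.sqrt_sq h4).symm
        _ ≤ Real.sqrt (t^2) := Real.sqrt_le_sqrt hsq
        _ = t := Real.sqrt_sq htnonneg
    have hcc0 : c < c0 := by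
      rw [hcdef]
      have h5 := min_le_left (min c0 ε) 1
      have h6 := min_le_left c0 ε
      linarith
    calc c * T < c0 * T := mul_lt_mul_of_pos_right hcc0 hT0
      _ ≤ t := hfinal
end

section
/- Let f(X) = X^6 - 3X^5 + 5X^4 - 5X^3 + 5X^2 - 3X + 1. Then f is irreducible over ℚ, all roots of f are non-real, and the roots can be labeled ξ₁, conj(ξ₁), ξ₂, conj(ξ₂), ξ₃, conj(ξ₃) so that ξ₁·conj(ξ₁) = 1, ξ₂ + conj(ξ₂) = 1, and ξ₃ + conj(ξ₃) = ξ₃·conj(ξ₃). -/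
open Polynomial

section Aux

open Complex

/-- Existence of the plastic number. -/
lemma exists_rho_aux : ∃ ρ : ℝ, ρ^3 = ρ + 1 ∧ 1 < ρ ∧ ρ < 2 := by
  have hc : ContinuousOn (fun x : ℝ => x^3 - x - 1) (Set.Icc 1 2) := by fun_prop
  have h := intermediate_value_Icc (by norm_num : (1:ℝ) ≤ 2) hc
  have h0 : (0:ℝ) ∈ Set.Icc ((fun x:ℝ => x^3 - x - 1) 1) ((fun x:ℝ => x^3 - x - 1) 2) := by
    norm_num
  obtain ⟨ρ, hmem, hval⟩ := h h0
  simp only at hval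
  have heq : ρ^3 = ρ + 1 := by linarith
  refine ⟨ρ, heq, ?_, ?_⟩
  · rcases lt_or_eq_of_le hmem.1 with h | h
    · exact h
    · exfalso; rw [← h] at heq; norm_num at heq
  · rcases lt_or_eq_of_le hmem.2 with h | h
    · exact h
    · exfalso; rw [h] at heq; norm_num at heq

lemma rho_irrational_aux {ρ : ℝ} (h3 : ρ^3 = ρ + 1) (h1 : 1 < ρ) (h2 : ρ < 2) :
    ∀ t : ℚ, (t : ℝ) ≠ ρ := by
  intro t ht
  have htq : t^3 = t + 1 := by
    have : ((t^3 : ℚ) : ℝ) = ((t + 1 : ℚ) : ℝ) := by push_cast; rw [ht]; exact h3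
    exact_mod_cast this
  set p : ℤ[X] := X^3 - X - 1 with hp
  have hmonic : p.Monic := by unfold p; monicity!
  have hroot : Polynomial.aeval t p = 0 := by
    simp [hp, map_sub, map_pow]
    linear_combination htq
  obtain ⟨r, hr, hdvd⟩ := exists_integer_of_is_root_of_monic hmonic hroot
  have hc0 : p.coeff 0 = -1 := by simp [hp, coeff_one]
  rw [hc0] at hdvd
  have : IsUnit r := isUnit_of_dvd_unit hdvd (by norm_num)
  rcases Int.isUnit_iff.mp this with h | h <;>
    · subst h; simp at hr; subst hr; simp at ht; rw [← ht] at h1 h2; norm_num at h1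

lemma rho_sq_irrational_aux {ρ : ℝ} (h3 : ρ^3 = ρ + 1) (h1 : 1 < ρ) (h2 : ρ < 2) :
    ∀ t : ℚ, (t : ℝ) ≠ ρ^2 - ρ := by
  intro t ht
  by_cases hc : t = 0
  · subst hc
    simp at ht
    nlinarith [sq_nonneg ρ]
  · -- t * ρ = 1 - t
    have hkey : (t:ℝ) * ρ = 1 - t := by nlinarith [ht.symm]
    have : ((1 - t)/t : ℚ) = (ρ : ℝ) := by
      push_cast
      rw [div_eq_iff (by exact_mod_cast hc : ((t:ℝ) ≠ 0))]
      linarith [hkey]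
    exact rho_irrational_aux h3 h1 h2 _ this

lemma cubic_real_root_aux (q : ℝ[X]) (hm : q.Monic) (h3 : q.natDegree = 3) :
    ∃ x : ℝ, q.eval x = 0 := by
  set a := q.coeff 2
  set b := q.coeff 1
  set c := q.coeff 0
  have hev : ∀ x : ℝ, q.eval x = c + b * x + a * x^2 + x^3 := by
    intro x
    rw [eval_eq_sum_range, h3]
    have hlead : q.coeff 3 = 1 := by
      have := hm.coeff_natDegree; rwa [h3] at this
    simp [Finset.sum_range_succ, hlead]
    try ring
  set M : ℝ := 1 + |a| + |b| + |c| with hM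
  have hM1 : 1 ≤ M := by
    have := abs_nonneg a; have := abs_nonneg b; have := abs_nonneg c; linarith
  have hpos : 0 < q.eval M := by
    rw [hev]
    nlinarith [le_abs_self a, le_abs_self b, le_abs_self c, neg_abs_le a, neg_abs_le b,
      neg_abs_le c, abs_nonneg a, abs_nonneg b, abs_nonneg c, sq_nonneg M, sq_nonneg (M-1)]
  have hneg : q.eval (-M) < 0 := by
    rw [hev]
    nlinarith [le_abs_self a, le_abs_self b, le_abs_self c, neg_abs_le a, neg_abs_le b,
      neg_abs_le c, abs_nonneg a, abs_nonneg b, abs_nonneg c, sq_nonneg M, sq_nonneg (M-1)]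
  have hcont : ContinuousOn (fun x : ℝ => q.eval x) (Set.Icc (-M) M) :=
    (Polynomial.continuous q).continuousOn
  have h := intermediate_value_Icc (by linarith : (-M:ℝ) ≤ M) hcont
  obtain ⟨x, _, hx⟩ := h ⟨hneg.le, hpos.le⟩
  exact ⟨x, hx⟩

lemma conj_mk_aux (x y : ℝ) : (starRingEnd ℂ) ((x:ℂ) + y * I) = (x:ℂ) - y * I := by
  simp [map_add, map_mul, conj_ofReal, conj_I]; ring

lemma pair_mul_aux (x y : ℝ) : ((x:ℂ) + y * I) * ((x:ℂ) - y * I) = ((x^2 + y^2 : ℝ) : ℂ) := by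
  have h := Complex.I_sq
  push_cast
  linear_combination (-(y:ℂ)^2) * h

lemma quad_factor_aux (ξ ξ' s p : ℂ) (hs : ξ + ξ' = s) (hp : ξ * ξ' = p) :
    (X - C ξ) * (X - C ξ') = X^2 - C s * X + C p := by
  rw [← hs, ← hp]
  simp only [map_add, map_mul]
  ring

end Aux

/-- The polynomial `X^6 - 3X^5 + 5X^4 - 5X^3 + 5X^2 - 3X + 1`. -/
noncomputable def fpoly : Polynomial ℚ :=
  X ^ 6 - 3 * X ^ 5 + 5 * X ^ 4 - 5 * X ^ 3 + 5 * X ^ 2 - 3 * X + 1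

set_option maxHeartbeats 2000000 in
theorem stmt8 :
    Irreducible fpoly ∧
    (∀ z : ℂ, Polynomial.aeval z fpoly = 0 → z.im ≠ 0) ∧
    ∃ ξ₁ ξ₂ ξ₃ : ℂ,
      (fpoly.map (algebraMap ℚ ℂ)).roots =
        {ξ₁, starRingEnd ℂ ξ₁, ξ₂, starRingEnd ℂ ξ₂, ξ₃, starRingEnd ℂ ξ₃} ∧
      ξ₁ * starRingEnd ℂ ξ₁ = 1 ∧
      ξ₂ + starRingEnd ℂ ξ₂ = 1 ∧
      ξ₃ + starRingEnd ℂ ξ₃ = ξ₃ * starRingEnd ℂ ξ₃ := by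
  classical
  obtain ⟨ρ, hρ3, hρ1, hρ2⟩ := exists_rho_aux
  -- imaginary parts
  set a₁ : ℝ := (1 - ρ)/2 with ha₁
  have hb₁arg : 0 < 1 - a₁^2 := by rw [ha₁]; nlinarith
  set b₁ : ℝ := Real.sqrt (1 - a₁^2) with hb₁
  have hb₁sq : b₁^2 = 1 - a₁^2 := Real.sq_sqrt hb₁arg.le
  have hb₁pos : 0 < b₁ := Real.sqrt_pos.mpr hb₁arg
  have hb₂arg : 0 < (ρ^2 - ρ) - (1/2:ℝ)^2 := by nlinarith
  set b₂ : ℝ := Real.sqrt ((ρ^2 - ρ) - (1/2:ℝ)^2) with hb₂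
  have hb₂sq : b₂^2 = (ρ^2 - ρ) - (1/2:ℝ)^2 := Real.sq_sqrt hb₂arg.le
  have hb₂pos : 0 < b₂ := Real.sqrt_pos.mpr hb₂arg
  set a₃ : ℝ := (ρ + 1)/2 with ha₃
  have hb₃arg : 0 < (ρ + 1) - a₃^2 := by rw [ha₃]; nlinarith
  set b₃ : ℝ := Real.sqrt ((ρ + 1) - a₃^2) with hb₃
  have hb₃sq : b₃^2 = (ρ + 1) - a₃^2 := Real.sq_sqrt hb₃arg.le
  have hb₃pos : 0 < b₃ := Real.sqrt_pos.mpr hb₃arg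
  -- the roots
  set ξ₁ : ℂ := (a₁:ℂ) + b₁ * Complex.I with hξ₁
  set ξ₂ : ℂ := ((1/2:ℝ):ℂ) + b₂ * Complex.I with hξ₂
  set ξ₃ : ℂ := (a₃:ℂ) + b₃ * Complex.I with hξ₃
  have hc₁ : starRingEnd ℂ ξ₁ = (a₁:ℂ) - b₁ * Complex.I := conj_mk_aux _ _
  have hc₂ : starRingEnd ℂ ξ₂ = ((1/2:ℝ):ℂ) - b₂ * Complex.I := conj_mk_aux _ _
  have hc₃ : starRingEnd ℂ ξ₃ = (a₃:ℂ) - b₃ * Complex.I := conj_mk_aux _ _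
  -- sums and products
  have hcast : ∀ x y : ℝ, x = y → (x:ℂ) = (y:ℂ) := fun x y h => by rw [h]
  have hsum₁ : ξ₁ + starRingEnd ℂ ξ₁ = 1 - (ρ:ℂ) := by
    rw [hξ₁, hc₁, ha₁]; push_cast; ring
  have hprod₁ : ξ₁ * starRingEnd ℂ ξ₁ = 1 := by
    rw [hξ₁, hc₁, pair_mul_aux, hcast _ _ (by nlinarith [hb₁sq] : a₁^2 + b₁^2 = 1)]
    norm_num
  have hsum₂ : ξ₂ + starRingEnd ℂ ξ₂ = 1 := by
    rw [hξ₂, hc₂]; push_cast; ring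
  have hprod₂ : ξ₂ * starRingEnd ℂ ξ₂ = (ρ:ℂ)^2 - (ρ:ℂ) := by
    rw [hξ₂, hc₂, pair_mul_aux,
      hcast _ _ (by nlinarith [hb₂sq] : (1/2:ℝ)^2 + b₂^2 = ρ^2 - ρ)]
    push_cast; ring
  have hsum₃ : ξ₃ + starRingEnd ℂ ξ₃ = (ρ:ℂ) + 1 := by
    rw [hξ₃, hc₃, ha₃]; push_cast; ring
  have hprod₃ : ξ₃ * starRingEnd ℂ ξ₃ = (ρ:ℂ) + 1 := by
    rw [hξ₃, hc₃, pair_mul_aux, hcast _ _ (by nlinarith [hb₃sq] : a₃^2 + b₃^2 = ρ + 1)]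
    push_cast; ring
  -- the factorization
  have hrc : ((ρ:ℝ):ℂ)^3 = (ρ:ℂ) + 1 := by
    have : ((ρ^3 : ℝ) : ℂ) = ((ρ + 1 : ℝ) : ℂ) := congrArg Complex.ofReal hρ3
    push_cast at this; exact this
  have hfact : fpoly.map (algebraMap ℚ ℂ) =
      (X^2 - C (1 - (ρ:ℂ)) * X + C 1) * (X^2 - C 1 * X + C ((ρ:ℂ)^2 - (ρ:ℂ))) *
        (X^2 - C ((ρ:ℂ) + 1) * X + C ((ρ:ℂ) + 1)) := by
    have Hm : (C (ρ:ℂ))^3 = C (ρ:ℂ) + 1 := by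
      rw [← map_pow, hrc, map_add, map_one]
    simp only [fpoly, Polynomial.map_add, Polynomial.map_sub, Polynomial.map_mul,
      Polynomial.map_pow, Polynomial.map_X, Polynomial.map_ofNat, Polynomial.map_one,
      map_sub, map_add, map_one, map_pow]
    linear_combination (-1 + (2 - C (ρ:ℂ)) * X + (C (ρ:ℂ) - 2) * X^2) * Hm
  have hfactlin : fpoly.map (algebraMap ℚ ℂ) =
      (Multiset.map (fun a => X - C a)
        ({ξ₁, starRingEnd ℂ ξ₁, ξ₂, starRingEnd ℂ ξ₂, ξ₃, starRingEnd ℂ ξ₃} : Multiset ℂ)).prod := by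
    rw [hfact]
    simp only [Multiset.insert_eq_cons, Multiset.map_cons, Multiset.map_singleton,
      Multiset.prod_cons, Multiset.prod_singleton]
    rw [show (X - C ξ₁) * ((X - C (starRingEnd ℂ ξ₁)) * ((X - C ξ₂) * ((X - C (starRingEnd ℂ ξ₂)) *
        ((X - C ξ₃) * (X - C (starRingEnd ℂ ξ₃)))))) =
        ((X - C ξ₁) * (X - C (starRingEnd ℂ ξ₁))) * (((X - C ξ₂) * (X - C (starRingEnd ℂ ξ₂))) *
        (((X - C ξ₃) * (X - C (starRingEnd ℂ ξ₃))))) from by ring,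
      quad_factor_aux _ _ _ _ hsum₁ hprod₁, quad_factor_aux _ _ _ _ hsum₂ hprod₂,
      quad_factor_aux _ _ _ _ hsum₃ hprod₃]
    ring
  have hroots : (fpoly.map (algebraMap ℚ ℂ)).roots =
      {ξ₁, starRingEnd ℂ ξ₁, ξ₂, starRingEnd ℂ ξ₂, ξ₃, starRingEnd ℂ ξ₃} := by
    rw [hfactlin, roots_multiset_prod_X_sub_C]
  -- basic facts about fpoly
  have hfm : fpoly.Monic := by unfold fpoly; monicity!
  have hfmapne : fpoly.map (algebraMap ℚ ℂ) ≠ 0 := (hfm.map _).ne_zero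
  -- part 2: no real roots
  have hP2 : ∀ z : ℂ, Polynomial.aeval z fpoly = 0 → z.im ≠ 0 := by
    intro z hz
    have hmem : z ∈ (fpoly.map (algebraMap ℚ ℂ)).roots := by
      rw [mem_roots hfmapne, IsRoot.def, eval_map, ← aeval_def]
      exact hz
    rw [hroots] at hmem
    have him : ∀ x y : ℝ, ((x:ℂ) + y * Complex.I).im = y := by intro x y; simp
    have him' : ∀ x y : ℝ, ((x:ℂ) - y * Complex.I).im = -y := by
      intro x y
      simp [sub_eq_add_neg]
    simp only [Multiset.insert_eq_cons, Multiset.mem_cons, Multiset.mem_singleton] at hmem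
    rcases hmem with rfl | rfl | rfl | rfl | rfl | rfl
    · rw [hξ₁, him]; exact hb₁pos.ne'
    · rw [hc₁, him']; exact (neg_ne_zero.mpr hb₁pos.ne')
    · rw [hξ₂, him]; exact hb₂pos.ne'
    · rw [hc₂, him']; exact (neg_ne_zero.mpr hb₂pos.ne')
    · rw [hξ₃, him]; exact hb₃pos.ne'
    · rw [hc₃, him']; exact (neg_ne_zero.mpr hb₃pos.ne')
  refine ⟨?_, hP2, ξ₁, ξ₂, ξ₃, hroots, hprod₁, hsum₂, by rw [hsum₃, hprod₃]⟩
  -- irreducibility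
  have hfdeg : fpoly.natDegree = 6 := by unfold fpoly; compute_degree!
  have hf1 : fpoly ≠ 1 := by
    intro h; rw [h] at hfdeg; simp at hfdeg
  rw [hfm.irreducible_iff_lt_natDegree_lt hf1]
  rintro q hq hmemq hdvd
  rw [hfdeg] at hmemq
  rw [Finset.mem_Ioc] at hmemq
  obtain ⟨w, hw⟩ := hdvd
  have hd0 : 0 < q.natDegree := hmemq.1
  have hd3 : q.natDegree ≤ 3 := by exact_mod_cast hmemq.2
  -- any complex root of q is a root of fpoly
  have hqroot : ∀ z : ℂ, Polynomial.aeval z q = 0 → Polynomial.aeval z fpoly = 0 := by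
    intro z hz
    rw [hw, map_mul, hz, zero_mul]
  interval_cases h : q.natDegree
  · -- degree 1
    have hq1 : q = X + C (q.coeff 0) := hq.eq_X_add_C h
    have : Polynomial.aeval (algebraMap ℚ ℂ (-(q.coeff 0))) q = 0 := by
      rw [hq1]; simp
    have him := hP2 _ (hqroot _ this)
    rw [eq_ratCast (algebraMap ℚ ℂ)] at him
    simp at him
  · -- degree 2
    have hQdeg : (q.map (algebraMap ℚ ℂ)).degree ≠ 0 := by
      rw [degree_eq_natDegree (hq.map _).ne_zero,
        natDegree_map_eq_of_injective (algebraMap ℚ ℂ).injective, h]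
      exact by norm_num
    obtain ⟨z, hz⟩ := Complex.exists_root (by
      rw [degree_eq_natDegree (hq.map _).ne_zero,
        natDegree_map_eq_of_injective (algebraMap ℚ ℂ).injective, h]
      norm_num)
    have hzq : Polynomial.aeval z q = 0 := by
      rw [aeval_def, ← eval_map]; exact hz
    have hzf := hqroot _ hzq
    have hzim := hP2 _ hzf
    -- get the quadratic equation
    set u : ℚ := q.coeff 1 with hu
    set v : ℚ := q.coeff 0 with hv
    have hquad : z^2 + (u:ℂ) * z + (v:ℂ) = 0 := by
      have := hzq
      rw [aeval_eq_sum_range, h] at this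
      have hlead : q.coeff 2 = 1 := by
        have := hq.coeff_natDegree; rwa [h] at this
      simp [Finset.sum_range_succ, hlead, eq_ratCast (algebraMap ℚ ℂ), Rat.smul_def] at this
      linear_combination this
    have hquadc : (starRingEnd ℂ z)^2 + (u:ℂ) * (starRingEnd ℂ z) + (v:ℂ) = 0 := by
      have := congrArg (starRingEnd ℂ) hquad
      simpa [map_add, map_mul, map_pow, map_ratCast] using this
    have hzne : z - starRingEnd ℂ z ≠ 0 := by
      rw [sub_ne_zero]
      intro hh
      exact hzim (by rw [← Complex.conj_eq_iff_im, ← hh])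
    have hfactor : (z - starRingEnd ℂ z) * (z + starRingEnd ℂ z + (u:ℂ)) = 0 := by
      linear_combination hquad - hquadc
    have hsumz : z + starRingEnd ℂ z = -(u:ℂ) := by
      rcases mul_eq_zero.mp hfactor with hh | hh
      · exact absurd hh hzne
      · linear_combination hh
    have hprodz : z * starRingEnd ℂ z = (v:ℂ) := by
      linear_combination z * hsumz - hquad
    -- z is one of the six roots
    have hmem : z ∈ (fpoly.map (algebraMap ℚ ℂ)).roots := by
      rw [mem_roots hfmapne, IsRoot.def, eval_map, ← aeval_def]
      exact hzf
    rw [hroots] at hmem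
    simp only [Multiset.insert_eq_cons, Multiset.mem_cons, Multiset.mem_singleton] at hmem
    have hrho_rat : ∀ t : ℚ, (ρ:ℂ) ≠ (t:ℂ) := by
      intro t hh
      apply rho_irrational_aux hρ3 hρ1 hρ2 t
      apply Complex.ofReal_inj.mp
      push_cast
      exact hh.symm
    have hrhosq_rat : ∀ t : ℚ, (ρ:ℂ)^2 - (ρ:ℂ) ≠ (t:ℂ) := by
      intro t hh
      apply rho_sq_irrational_aux hρ3 hρ1 hρ2 t
      apply Complex.ofReal_inj.mp
      push_cast
      exact hh.symm
    rcases hmem with rfl | hz1 | rfl | hz2 | rfl | hz3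
    · rw [hsum₁] at hsumz
      exact hrho_rat (u + 1) (by push_cast; linear_combination -hsumz)
    · rw [hz1] at hsumz
      rw [Complex.conj_conj, add_comm, hsum₁] at hsumz
      exact hrho_rat (u + 1) (by push_cast; linear_combination -hsumz)
    · rw [hprod₂] at hprodz
      exact hrhosq_rat v (by push_cast; linear_combination hprodz)
    · rw [hz2] at hprodz
      rw [Complex.conj_conj, mul_comm, hprod₂] at hprodz
      exact hrhosq_rat v (by push_cast; linear_combination hprodz)
    · rw [hsum₃] at hsumz
      exact hrho_rat (-u - 1) (by push_cast; linear_combination hsumz)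
    · rw [hz3] at hsumz
      rw [Complex.conj_conj, add_comm, hsum₃] at hsumz
      exact hrho_rat (-u - 1) (by push_cast; linear_combination hsumz)
  · -- degree 3
    have hqr : (q.map (algebraMap ℚ ℝ)).Monic := hq.map _
    have hqrdeg : (q.map (algebraMap ℚ ℝ)).natDegree = 3 := by
      rw [natDegree_map_eq_of_injective (algebraMap ℚ ℝ).injective, h]
    obtain ⟨x, hx⟩ := cubic_real_root_aux _ hqr hqrdeg
    have hxq : Polynomial.aeval ((x:ℂ)) q = 0 := by
      have h1 : Polynomial.aeval x q = 0 := by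
        rw [aeval_def, ← eval_map]; exact hx
      have h2 := Polynomial.aeval_algebraMap_apply ℂ x q
      rw [h1, map_zero] at h2
      simpa using h2
    have him := hP2 _ (hqroot _ hxq)
    simp at him
end
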